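/- Let A₁, A₂, A₃ be real numbers and let D(F) := 18A₁A₂A₃ + (A₁A₂)² − 4A₃A₁³ − 4A₂³ − 27A₃². If D(F) > 0, A₁ > 0, A₃ > 0, and A₁A₂ − A₃ > 0, then every complex root ξ of the cubic F(ξ) = ξ³ + A₁ξ² + A₂ξ + A₃ satisfies |arg(ξ)| > mπ/2 for every m ∈ (0, 1]. -/
import Mathlib


/-- Matignon stability criterion, case (i): if `D(F) > 0`, `A₁ > 0`, `A₃ > 0` and
`A₁A₂ − A₃ > 0`, then every complex root `ξ` of `F(ξ) = ξ³ + A₁ξ² + A₂ξ + A₃` satisfies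
`|arg ξ| > mπ/2` for every `m ∈ (0, 1]`. -/
theorem matignon_stable_case_i
    (A₁ A₂ A₃ : ℝ)
    (hD : 0 < 18 * A₁ * A₂ * A₃ + (A₁ * A₂) ^ 2 - 4 * A₃ * A₁ ^ 3 - 4 * A₂ ^ 3 - 27 * A₃ ^ 2)
    (h1 : 0 < A₁) (h3 : 0 < A₃) (h13 : 0 < A₁ * A₂ - A₃) :
    ∀ ξ : ℂ, ξ ^ 3 + (A₁ : ℂ) * ξ ^ 2 + (A₂ : ℂ) * ξ + (A₃ : ℂ) = 0 →
      ∀ m : ℝ, 0 < m → m ≤ 1 → m * Real.pi / 2 < |ξ.arg| := by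
  intro ξ hξ m hm hm1
  have h2 : 0 < A₂ := by nlinarith
  set x := ξ.re with hx
  set y := ξ.im with hy
  -- real and imaginary parts of the root equation
  have hre : x ^ 3 - 3 * x * y ^ 2 + A₁ * (x ^ 2 - y ^ 2) + A₂ * x + A₃ = 0 := by
    have := congrArg Complex.re hξ
    simp only [Complex.add_re, Complex.mul_re, Complex.ofReal_re, Complex.ofReal_im,
      pow_succ, pow_zero, one_mul, Complex.mul_im, Complex.zero_re] at this
    ring_nf at this ⊢
    linarith
  have him : y * (3 * x ^ 2 - y ^ 2 + 2 * A₁ * x + A₂) = 0 := by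
    have := congrArg Complex.im hξ
    simp only [Complex.add_im, Complex.mul_re, Complex.mul_im, Complex.ofReal_re,
      Complex.ofReal_im, pow_succ, pow_zero, one_mul, Complex.zero_im] at this
    ring_nf at this ⊢
    linarith
  -- the root has negative real part
  have hxneg : x < 0 := by
    by_contra hc
    push_neg at hc
    rcases mul_eq_zero.mp him with hy0 | hq
    · -- real root: all coefficients positive
      rw [hy0] at hre
      nlinarith [pow_nonneg hc 3, sq_nonneg x, mul_nonneg hc hc]
    · -- complex root: y² = 3x² + 2A₁x + A₂, substitute
      have hy2 : y ^ 2 = 3 * x ^ 2 + 2 * A₁ * x + A₂ := by linarith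
      rw [hy2] at hre
      nlinarith [pow_nonneg hc 3, sq_nonneg x, mul_nonneg (mul_nonneg h1.le hc) hc,
        mul_nonneg h2.le hc, mul_nonneg (mul_nonneg h1.le h1.le) hc]
  -- hence |arg ξ| > π/2 ≥ mπ/2
  have harg : Real.pi / 2 < |ξ.arg| := by
    by_contra hc
    push_neg at hc
    exact absurd (Complex.abs_arg_le_pi_div_two_iff.mp hc) (not_le.mpr hxneg)
  have hpi : 0 < Real.pi := Real.pi_pos
  calc m * Real.pi / 2 ≤ Real.pi / 2 := by nlinarith
    _ < |ξ.arg| := harg
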